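/- Let c, A, E ∈ ℝ with A ≠ 0, and let φ : ℝ → ℝ be three times continuously differentiable such that for all x: (φ − φ'')·((φ')² − φ² + c) = A, E − 4·A·φ(x) > 0, and φ² − (φ')² − c = −√(E − 4Aφ). Then the function μ := φ − φ'' satisfies, for all x: μ = A/√(E − 4Aφ) and μ' = (2/A)·φ'·μ³. -/
import Mathlib


/-- on the homoclinic branch `φ² − (φ')² − c = −√(E − 4Aφ)`,
the momentum profile `μ = φ − φ''` satisfies `μ = A/√(E − 4Aφ)` and
`μ' = (2/A)·φ'·μ³`. -/
theorem one_soliton_momentum (c A E : ℝ) (hA : A ≠ 0) (φ : ℝ → ℝ)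
    (hφ : ContDiff ℝ 3 φ)
    (hODE : ∀ x, (φ x - deriv (deriv φ) x) * ((deriv φ x) ^ 2 - (φ x) ^ 2 + c) = A)
    (hpos : ∀ x, 0 < E - 4 * A * φ x)
    (hbranch : ∀ x, (φ x) ^ 2 - (deriv φ x) ^ 2 - c = -Real.sqrt (E - 4 * A * φ x)) :
    ∀ x,
      (φ x - deriv (deriv φ) x = A / Real.sqrt (E - 4 * A * φ x))
      ∧ deriv (fun y => φ y - deriv (deriv φ) y) x
          = (2 / A) * deriv φ x * (φ x - deriv (deriv φ) x) ^ 3 := by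
  have hspos : ∀ y, 0 < Real.sqrt (E - 4 * A * φ y) := fun y =>
    Real.sqrt_pos.mpr (hpos y)
  have hmu : ∀ y, φ y - deriv (deriv φ) y = A / Real.sqrt (E - 4 * A * φ y) := by
    intro y
    have h1 : (deriv φ y) ^ 2 - (φ y) ^ 2 + c = Real.sqrt (E - 4 * A * φ y) := by
      have := hbranch y; linarith
    have h2 := hODE y
    rw [h1] at h2
    rw [eq_div_iff (ne_of_gt (hspos y))]
    linarith [h2]
  intro x
  refine ⟨hmu x, ?_⟩
  have hfun : (fun y => φ y - deriv (deriv φ) y)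
      = (fun y => A / Real.sqrt (E - 4 * A * φ y)) := funext hmu
  rw [hfun]
  have hφ' : HasDerivAt φ (deriv φ x) x :=
    ((hφ.differentiable (by norm_num)) x).hasDerivAt
  have hg : HasDerivAt (fun y => E - 4 * A * φ y) (-(4 * A * deriv φ x)) x :=
    (hφ'.const_mul (4 * A)).const_sub E
  have hsq : HasDerivAt (fun y => Real.sqrt (E - 4 * A * φ y))
      (1 / (2 * Real.sqrt (E - 4 * A * φ x)) * -(4 * A * deriv φ x)) x := by
    exact (Real.hasDerivAt_sqrt (ne_of_gt (hpos x))).comp x hg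
  have hsne : Real.sqrt (E - 4 * A * φ x) ≠ 0 := ne_of_gt (hspos x)
  have hdiv : HasDerivAt (fun y => A / Real.sqrt (E - 4 * A * φ y))
      ((0 * Real.sqrt (E - 4 * A * φ x)
        - A * (1 / (2 * Real.sqrt (E - 4 * A * φ x)) * -(4 * A * deriv φ x)))
        / Real.sqrt (E - 4 * A * φ x) ^ 2) x :=
    (hasDerivAt_const x A).div hsq hsne
  rw [hdiv.deriv, hmu x]
  field_simp
  ring_nf
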